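/- For every integer k ≥ 4, every resolution refutation of the formula TPHP has pigeon-width at least k−1, i.e., it contains a clause mentioning at least k−1 pigeons. -/

import Mathlib

namespace NarrowProofs

/-- A clause is a finite set of literals; a literal is a variable together with a
sign (`true` = positive literal, `false` = negative literal). -/
abbrev Clause (V : Type) := Finset (V × Bool)

/-- Justification of a step in a resolution derivation. -/
inductive ResJust (V : Type) where
  | ax : ResJust V
  | res (i j : ℕ) (x : V) : ResJust V
  | weak (i : ℕ) : ResJust V

/-- A resolution refutation of a CNF formula `F`. -/
structure ResRefutation (V : Type) [DecidableEq V] (F : Set (Clause V)) where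
  lines : List (Clause V)
  justs : List (ResJust V)
  len_eq : justs.length = lines.length
  ne : lines ≠ []
  valid : ∀ t C, lines[t]? = some C →
    match justs[t]? with
    | some ResJust.ax => C ∈ F
    | some (ResJust.res i j x) => i < t ∧ j < t ∧ ∃ A B : Clause V,
        lines[i]? = some A ∧ lines[j]? = some B ∧
        (x, true) ∈ A ∧ (x, false) ∈ B ∧
        C = (A.erase (x, true)) ∪ (B.erase (x, false))
    | some (ResJust.weak i) => i < t ∧ ∃ A : Clause V, lines[i]? = some A ∧ A ⊆ C
    | none => False
  last_empty : lines.getLast ne = ∅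

/-- The variables of the 3-CNF pigeonhole principle `TPHP`: `q v w` and `z v w`
mention pigeon `v`. -/
inductive TVar where
  | q (v w : ℕ)
  | z (v w : ℕ)
deriving DecidableEq

/-- The pigeon mentioned by a variable of `TPHP`. -/
def TVar.pigeon : TVar → ℕ
  | .q v _ => v
  | .z v _ => v

/-- The 3-CNF pigeonhole principle formula with `k` pigeons and `k-1` holes
(1-based indices). -/
def TPHP (k : ℕ) : Set (Clause TVar) :=
  { C |
    (∃ v, 1 ≤ v ∧ v ≤ k ∧
      C = {(TVar.q v 1, true), (TVar.z v 1, true)}) ∨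
    (∃ v w, 1 ≤ v ∧ v ≤ k ∧ 1 ≤ w ∧ w ≤ k - 4 ∧
      C = {(TVar.z v w, false), (TVar.q v (w+1), true), (TVar.z v (w+1), true)}) ∨
    (∃ v, 1 ≤ v ∧ v ≤ k ∧
      C = {(TVar.z v (k-3), false), (TVar.q v (k-2), true), (TVar.q v (k-1), true)}) ∨
    (∃ v v' w, 1 ≤ v ∧ v ≤ k ∧ 1 ≤ v' ∧ v' ≤ k ∧ v ≠ v' ∧ 1 ≤ w ∧ w ≤ k - 1 ∧
      C = {(TVar.q v w, false), (TVar.q v' w, false)}) }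

/-- The pigeon-width of a clause: the number of pigeons mentioned by its
variables. -/
def pigeonWidth (C : Clause TVar) : ℕ :=
  (C.image (fun l => l.1.pigeon)).card


/-- The assignment induced by a matching `f` (pigeon `v` goes to hole `f v`):
`q v w` is true iff `f v = w`, and `z v w` is true iff `w < f v`. -/
def assignF (f : ℕ → ℕ) : TVar → Bool
  | .q v w => decide (f v = w)
  | .z v w => decide (w < f v)

/-- The set of pigeons mentioned by a clause. -/
def pset (C : Clause TVar) : Finset ℕ := C.image (fun l => l.1.pigeon)

/-- A clause is `good` if some matching assignment, injective and with holes in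
`[1, k-1]` on the pigeons of the clause, falsifies it. -/
def good (k : ℕ) (C : Clause TVar) : Prop :=
  ∃ f : ℕ → ℕ,
    (∀ v ∈ pset C, 1 ≤ f v ∧ f v ≤ k - 1) ∧
    (∀ v ∈ pset C, ∀ v' ∈ pset C, f v = f v' → v = v') ∧
    (∀ l ∈ C, assignF f l.1 ≠ l.2)

lemma mem_pset {C : Clause TVar} {l : TVar × Bool} (hl : l ∈ C) : l.1.pigeon ∈ pset C :=
  Finset.mem_image_of_mem _ hl

lemma assignF_update_ne (f : ℕ → ℕ) (h p : ℕ) (x : TVar) (hne : x.pigeon ≠ p) :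
    assignF (Function.update f p h) x = assignF f x := by
  cases x with
  | q v w => simp [TVar.pigeon] at hne; simp [assignF, Function.update_of_ne hne]
  | z v w => simp [TVar.pigeon] at hne; simp [assignF, Function.update_of_ne hne]

/-- No axiom of `TPHP k` can be falsified by an injective matching assignment
on its pigeons. -/
lemma axiom_not_good {k : ℕ} (hk : 4 ≤ k) {C : Clause TVar} (hC : C ∈ TPHP k) :
    ¬ good k C := by
  rintro ⟨f, h1, h2, h3⟩
  rcases hC with ⟨v, hv1, hvk, rfl⟩ | ⟨v, w, _, _, _, _, rfl⟩ | ⟨v, hv1, hvk, rfl⟩ |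
    ⟨v, v', w, _, _, _, _, hne, _, _, rfl⟩
  · have ha := h3 (TVar.q v 1, true) (by simp)
    have hb := h3 (TVar.z v 1, true) (by simp)
    have hr := h1 (TVar.q v 1).pigeon (mem_pset (l := (TVar.q v 1, true)) (by simp))
    simp [assignF, TVar.pigeon] at ha hb hr
    omega
  · have ha := h3 (TVar.z v w, false) (by simp)
    have hb := h3 (TVar.q v (w+1), true) (by simp)
    have hc := h3 (TVar.z v (w+1), true) (by simp)
    simp [assignF] at ha hb hc
    omega
  · have ha := h3 (TVar.z v (k-3), false) (by simp)
    have hb := h3 (TVar.q v (k-2), true) (by simp)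
    have hc := h3 (TVar.q v (k-1), true) (by simp)
    have hr := h1 (TVar.z v (k-3)).pigeon (mem_pset (l := (TVar.z v (k-3), false)) (by simp))
    simp [assignF, TVar.pigeon] at ha hb hc hr
    omega
  · have ha := h3 (TVar.q v w, false) (by simp)
    have hb := h3 (TVar.q v' w, false) (by simp)
    have hv := mem_pset (C := ({(TVar.q v w, false), (TVar.q v' w, false)} : Clause TVar))
      (l := (TVar.q v w, false)) (by simp)
    have hv' := mem_pset (C := ({(TVar.q v w, false), (TVar.q v' w, false)} : Clause TVar))
      (l := (TVar.q v' w, false)) (by simp)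
    simp [assignF] at ha hb
    simp [TVar.pigeon] at hv hv'
    exact hne (h2 v hv v' hv' (by omega))

/-- for every `k ≥ 4`, every resolution refutation of `TPHP`
has pigeon-width at least `k−1`, i.e., it contains a clause mentioning at
least `k−1` pigeons. -/
theorem tphp_pigeon_width_lower_bound (k : ℕ) (hk : 4 ≤ k)
    (π : ResRefutation TVar (TPHP k)) :
    ∃ C ∈ π.lines, k - 1 ≤ pigeonWidth C := by
  by_contra hcon
  push_neg at hcon
  have hw : ∀ C ∈ π.lines, (pset C).card ≤ k - 2 := by
    intro C hC
    have h := hcon C hC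
    unfold pigeonWidth at h
    unfold pset
    omega
  have key : ∀ t : ℕ, ∀ C : Clause TVar, π.lines[t]? = some C → ¬ good k C := by
    intro t
    induction t using Nat.strong_induction_on with
    | _ t IH =>
      intro C hC hg
      have hCmem : C ∈ π.lines := by
        have := List.getElem?_eq_some_iff.mp hC
        exact this.2 ▸ List.getElem_mem _
      have hv := π.valid t C hC
      cases hj : π.justs[t]? with
      | none => rw [hj] at hv; exact hv
      | some j =>
        rw [hj] at hv
        cases j with
        | ax => exact axiom_not_good hk hv hg
        | weak i =>
          obtain ⟨hit, A, hA, hAC⟩ := hv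
          obtain ⟨f, h1, h2, h3⟩ := hg
          have hsub : pset A ⊆ pset C := Finset.image_subset_image hAC
          exact IH i hit A hA ⟨f, fun v hv => h1 v (hsub hv),
            fun v hv v' hv' => h2 v (hsub hv) v' (hsub hv'),
            fun l hl => h3 l (hAC hl)⟩
        | res i j x =>
          obtain ⟨hit, hjt, A, B, hA, hB, hxA, hxB, hCdef⟩ := hv
          obtain ⟨f, h1, h2, h3⟩ := hg
          set p := x.pigeon with hp
          -- build an assignment also covering the resolved pigeon
          obtain ⟨g, hg1, hg2, hg3⟩ :
              ∃ g : ℕ → ℕ,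
                (∀ v ∈ insert p (pset C), 1 ≤ g v ∧ g v ≤ k - 1) ∧
                (∀ v ∈ insert p (pset C), ∀ v' ∈ insert p (pset C),
                  g v = g v' → v = v') ∧
                (∀ l ∈ C, assignF g l.1 ≠ l.2) := by
            by_cases hpc : p ∈ pset C
            · refine ⟨f, ?_, ?_, h3⟩
              · intro v hv
                rcases Finset.mem_insert.mp hv with rfl | hv
                · exact h1 _ hpc
                · exact h1 _ hv
              · intro v hv v' hv'
                rcases Finset.mem_insert.mp hv with rfl | hv <;>
                  rcases Finset.mem_insert.mp hv' with rfl | hv'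
                · intro _; rfl
                · exact h2 _ hpc _ hv'
                · exact h2 _ hv _ hpc
                · exact h2 _ hv _ hv'
            · have hcard : ((pset C).image f).card < (Finset.Icc 1 (k-1)).card := by
                have h1' : ((pset C).image f).card ≤ (pset C).card :=
                  Finset.card_image_le
                have h2' := hw C hCmem
                rw [Nat.card_Icc]
                omega
              have hns : ¬ Finset.Icc 1 (k-1) ⊆ (pset C).image f := by
                intro hsub
                exact absurd (Finset.card_le_card hsub) (by omega)
              obtain ⟨h, hhI, hhim⟩ := Finset.not_subset.mp hns
              rw [Finset.mem_Icc] at hhI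
              refine ⟨Function.update f p h, ?_, ?_, ?_⟩
              · intro v hv
                rcases Finset.mem_insert.mp hv with rfl | hv
                · simp [Function.update_self]; omega
                · have : v ≠ p := fun e => hpc (e ▸ hv)
                  rw [Function.update_of_ne this]
                  exact h1 _ hv
              · intro v hv v' hv'
                rcases Finset.mem_insert.mp hv with rfl | hv <;>
                  rcases Finset.mem_insert.mp hv' with rfl | hv'
                · intro _; rfl
                · have hne' : v' ≠ p := fun e => hpc (e ▸ hv')
                  rw [Function.update_self, Function.update_of_ne hne']
                  intro he
                  exact absurd (Finset.mem_image_of_mem f hv') (he ▸ hhim)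
                · have hne' : v ≠ p := fun e => hpc (e ▸ hv)
                  rw [Function.update_self, Function.update_of_ne hne']
                  intro he
                  exact absurd (he ▸ Finset.mem_image_of_mem f hv) hhim
                · have hnv : v ≠ p := fun e => hpc (e ▸ hv)
                  have hnv' : v' ≠ p := fun e => hpc (e ▸ hv')
                  rw [Function.update_of_ne hnv, Function.update_of_ne hnv']
                  exact h2 _ hv _ hv'
              · intro l hl
                have hlp : l.1.pigeon ≠ p := fun e => hpc (e ▸ mem_pset hl)
                rw [assignF_update_ne f h p l.1 hlp]
                exact h3 l hl
          -- pset of premises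
          have hpsA : pset A ⊆ insert p (pset C) := by
            intro v hv
            obtain ⟨l, hl, rfl⟩ := Finset.mem_image.mp hv
            by_cases hlx : l = (x, true)
            · subst hlx; exact Finset.mem_insert_self _ _
            · have : l ∈ C := hCdef ▸ Finset.mem_union_left _
                (Finset.mem_erase.mpr ⟨hlx, hl⟩)
              exact Finset.mem_insert_of_mem (mem_pset this)
          have hpsB : pset B ⊆ insert p (pset C) := by
            intro v hv
            obtain ⟨l, hl, rfl⟩ := Finset.mem_image.mp hv
            by_cases hlx : l = (x, false)
            · subst hlx; exact Finset.mem_insert_self _ _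
            · have : l ∈ C := hCdef ▸ Finset.mem_union_right _
                (Finset.mem_erase.mpr ⟨hlx, hl⟩)
              exact Finset.mem_insert_of_mem (mem_pset this)
          cases hax : assignF g x with
          | true =>
            refine IH j hjt B hB ⟨g, fun v hv => hg1 v (hpsB hv),
              fun v hv v' hv' => hg2 v (hpsB hv) v' (hpsB hv'), ?_⟩
            intro l hl
            by_cases hlx : l = (x, false)
            · subst hlx; simp [hax]
            · have : l ∈ C := hCdef ▸ Finset.mem_union_right _
                (Finset.mem_erase.mpr ⟨hlx, hl⟩)
              exact hg3 l this
          | false =>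
            refine IH i hit A hA ⟨g, fun v hv => hg1 v (hpsA hv),
              fun v hv v' hv' => hg2 v (hpsA hv) v' (hpsA hv'), ?_⟩
            intro l hl
            by_cases hlx : l = (x, true)
            · subst hlx; simp [hax]
            · have : l ∈ C := hCdef ▸ Finset.mem_union_left _
                (Finset.mem_erase.mpr ⟨hlx, hl⟩)
              exact hg3 l this
  -- the last (empty) clause is good: contradiction
  have hne : π.lines ≠ [] := π.ne
  have hlen : 0 < π.lines.length := List.length_pos_iff.mpr hne
  have hlast : π.lines[π.lines.length - 1]? = some ∅ := by
    rw [List.getElem?_eq_getElem (by omega)]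
    rw [← List.getLast_eq_getElem]
    exact congrArg some π.last_empty
    exact hne
  exact key (π.lines.length - 1) ∅ hlast
    ⟨fun _ => 1, by simp [pset], by simp [pset], by simp⟩

end NarrowProofs
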